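/- Let {A_k}_{k≥1} be N×N column-stochastic matrices with every entry at least ε⁴/N, and let {B_k}_{k≥1} be d×N matrices with all entries bounded in absolute value by 2K/ε³, where ε ∈ (0,1) and K ≥ 1. Define W_n via W_{n+1} = W_n A_{n+1} + B_{n+1} from an initial d×N matrix W_0, and set V_n = W_n(I − ee^T/N). Then for all n ≥ 1, the maximal absolute entry of V_n satisfies ‖V_n‖ ≤ (4K/ε⁷)(1 + (1−ε⁴)^n ‖V_0‖). -/

import Mathlib

open Finset

/-- Dobrushin-type contraction: pairing an oscillation-bounded vector against the
difference of two probability vectors with entries at least `δ`. -/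
lemma dobrushin_aux {N : ℕ} (δ M : ℝ) (hM : 0 ≤ M) (p q w : Fin N → ℝ)
    (hp : ∀ k, δ ≤ p k) (hq : ∀ k, δ ≤ q k)
    (hps : ∑ k, p k = 1) (hqs : ∑ k, q k = 1)
    (hw : ∀ k k', |w k - w k'| ≤ M) :
    |∑ k, w k * (p k - q k)| ≤ (1 - N * δ) * M := by
  have hNe : (univ : Finset (Fin N)).Nonempty := by
    by_contra h
    rw [not_nonempty_iff_eq_empty] at h
    rw [h] at hps
    simp at hps
  obtain ⟨k0, -, hk0⟩ := Finset.exists_min_image univ w hNe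
  have hk0' : ∀ k, 0 ≤ w k - w k0 := fun k => sub_nonneg.mpr (hk0 k (mem_univ k))
  have hwM : ∀ k, w k - w k0 ≤ M := fun k => (abs_le.mp (hw k k0)).2
  have h0 : ∑ k, (p k - q k) = 0 := by
    rw [Finset.sum_sub_distrib, hps, hqs, sub_self]
  have hrw : ∑ k, w k * (p k - q k) = ∑ k, (w k - w k0) * (p k - q k) := by
    simp only [sub_mul, Finset.sum_sub_distrib, ← Finset.mul_sum, h0, mul_zero, sub_zero]
  have hcard : ∑ _k : Fin N, δ = (N : ℝ) * δ := by
    simp [Finset.sum_const, Finset.card_univ, nsmul_eq_mul]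
  rw [hrw, abs_le]
  constructor
  · have h1 : ∀ k ∈ univ, M * (δ - q k) ≤ (w k - w k0) * (p k - q k) := by
      intro k _
      have t1 : (w k - w k0) * (δ - q k) ≤ (w k - w k0) * (p k - q k) :=
        mul_le_mul_of_nonneg_left (by linarith [hp k]) (hk0' k)
      have t2 : M * (δ - q k) ≤ (w k - w k0) * (δ - q k) :=
        mul_le_mul_of_nonpos_right (hwM k) (by linarith [hq k])
      linarith
    calc -((1 - N * δ) * M) = M * (∑ k, (δ - q k)) := by
          rw [Finset.sum_sub_distrib, hqs, hcard]; ring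
      _ ≤ ∑ k, (w k - w k0) * (p k - q k) := by
          rw [Finset.mul_sum]; exact Finset.sum_le_sum h1
  · have h1 : ∀ k ∈ univ, (w k - w k0) * (p k - q k) ≤ M * (p k - δ) := by
      intro k _
      have t1 : (w k - w k0) * (p k - q k) ≤ (w k - w k0) * (p k - δ) :=
        mul_le_mul_of_nonneg_left (by linarith [hq k]) (hk0' k)
      have t2 : (w k - w k0) * (p k - δ) ≤ M * (p k - δ) :=
        mul_le_mul_of_nonneg_right (hwM k) (by linarith [hp k])
      linarith
    calc ∑ k, (w k - w k0) * (p k - q k) ≤ ∑ k, M * (p k - δ) :=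
          Finset.sum_le_sum h1
      _ = (1 - N * δ) * M := by
          rw [← Finset.mul_sum, Finset.sum_sub_distrib, hps, hcard]; ring

/-- The maximal absolute value of the entries of a matrix. -/
noncomputable def entryNorm {d N : ℕ} (M : Matrix (Fin d) (Fin N) ℝ) : ℝ :=
  ⨆ p : Fin d × Fin N, |M p.1 p.2|

/-- Uniform-in-time bound on the centered weight matrices `V_n = W_n(I - ee^T/N)`
generated by the recursion `W_{n+1} = W_n A_{n+1} + B_{n+1}`
(Proposition 4.1, key estimate). -/
theorem stmt_6 {d N : ℕ} (hd : 0 < d) (hN : 0 < N)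
    (ε K : ℝ) (hε : ε ∈ Set.Ioo (0 : ℝ) 1) (hK : 1 ≤ K)
    (A : ℕ → Matrix (Fin N) (Fin N) ℝ)
    (hAnn : ∀ k, 1 ≤ k → ∀ i j, ε ^ 4 / N ≤ A k i j)
    (hAcol : ∀ k, 1 ≤ k → ∀ j, ∑ i, A k i j = 1)
    (B : ℕ → Matrix (Fin d) (Fin N) ℝ)
    (hB : ∀ k, 1 ≤ k → ∀ i j, |B k i j| ≤ 2 * K / ε ^ 3)
    (W : ℕ → Matrix (Fin d) (Fin N) ℝ)
    (hW : ∀ n, W (n + 1) = W n * A (n + 1) + B (n + 1))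
    (V : ℕ → Matrix (Fin d) (Fin N) ℝ)
    (hV : ∀ n, V n = W n * (1 - Matrix.of fun _ _ : Fin N => (1 : ℝ) / N)) :
    ∀ n, 1 ≤ n →
      entryNorm (V n) ≤ (4 * K / ε ^ 7) * (1 + (1 - ε ^ 4) ^ n * entryNorm (V 0)) := by
  obtain ⟨hε0, hε1⟩ := hε
  have hNR : (0 : ℝ) < N := Nat.cast_pos.mpr hN
  have hεp3 : (0 : ℝ) < ε ^ 3 := pow_pos hε0 3
  have hεp4 : (0 : ℝ) < ε ^ 4 := pow_pos hε0 4
  have hεp7 : (0 : ℝ) < ε ^ 7 := pow_pos hε0 7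
  have hε4le : ε ^ 4 ≤ 1 := pow_le_one₀ hε0.le hε1.le
  have hε7le : ε ^ 7 ≤ 1 := pow_le_one₀ hε0.le hε1.le
  have hr0 : (0 : ℝ) ≤ 1 - ε ^ 4 := by linarith
  -- entrywise formula for V
  have hVW : ∀ n i j, V n i j = W n i j - (1 / N) * ∑ k, W n i k := by
    intro n i j
    have h1 : V n i j
        = ∑ k, W n i k * ((if k = j then (1 : ℝ) else 0) - 1 / N) := by
      rw [hV n, Matrix.mul_apply]
      refine Finset.sum_congr rfl fun k _ => ?_
      congr 1
    rw [h1]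
    simp only [mul_sub, Finset.sum_sub_distrib, mul_ite, mul_one, mul_zero,
      Finset.sum_ite_eq', mem_univ, if_true]
    rw [Finset.mul_sum]
    congr 1
    refine Finset.sum_congr rfl fun k _ => ?_
    ring
  -- entryNorm basics
  have hne : Nonempty (Fin d × Fin N) := ⟨⟨⟨0, hd⟩, ⟨0, hN⟩⟩⟩
  have hle : ∀ (M : Matrix (Fin d) (Fin N) ℝ) i j, |M i j| ≤ entryNorm M := by
    intro M i j
    show |M i j| ≤ ⨆ p : Fin d × Fin N, |M p.1 p.2|
    exact le_ciSup (f := fun p : Fin d × Fin N => |M p.1 p.2|)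
      (Set.Finite.bddAbove (Set.finite_range _)) (⟨i, j⟩ : Fin d × Fin N)
  have hV0 : 0 ≤ entryNorm (V 0) :=
    le_trans (abs_nonneg _) (hle (V 0) ⟨0, hd⟩ ⟨0, hN⟩)
  have hc0 : (0 : ℝ) ≤ 4 * K / ε ^ 3 := by positivity
  -- oscillation induction
  have key : ∀ n, ∀ i j j', |W n i j - W n i j'| ≤
      (1 - ε ^ 4) ^ n * (2 * entryNorm (V 0))
        + (4 * K / ε ^ 3) * ∑ m ∈ Finset.range n, (1 - ε ^ 4) ^ m := by
    intro n
    induction n with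
    | zero =>
      intro i j j'
      have e1 : W 0 i j - W 0 i j' = V 0 i j - V 0 i j' := by
        rw [hVW 0 i j, hVW 0 i j']; ring
      rw [e1]
      simp only [pow_zero, Finset.range_zero, Finset.sum_empty, mul_zero, add_zero, one_mul]
      calc |V 0 i j - V 0 i j'| ≤ |V 0 i j| + |V 0 i j'| := abs_sub _ _
        _ ≤ 2 * entryNorm (V 0) := by
            have h1 := hle (V 0) i j; have h2 := hle (V 0) i j'; linarith
    | succ n ih =>
      intro i j j'
      have hWs : ∀ j, W (n + 1) i j = (∑ k, W n i k * A (n + 1) k j) + B (n + 1) i j := by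
        intro j
        rw [hW n]
        simp [Matrix.add_apply, Matrix.mul_apply]
      have hsum0 : (0 : ℝ) ≤ ∑ m ∈ Finset.range n, (1 - ε ^ 4) ^ m :=
        Finset.sum_nonneg fun m _ => pow_nonneg hr0 m
      have hMn : (0 : ℝ) ≤ (1 - ε ^ 4) ^ n * (2 * entryNorm (V 0))
          + (4 * K / ε ^ 3) * ∑ m ∈ Finset.range n, (1 - ε ^ 4) ^ m := by
        have := pow_nonneg hr0 n
        have := mul_nonneg hc0 hsum0
        nlinarith
      have hk1 : 1 ≤ n + 1 := Nat.le_add_left 1 n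
      have hdob := dobrushin_aux (ε ^ 4 / N) _ hMn
        (fun k => A (n + 1) k j) (fun k => A (n + 1) k j') (fun k => W n i k)
        (fun k => hAnn (n + 1) hk1 k j)
        (fun k => hAnn (n + 1) hk1 k j')
        (hAcol (n + 1) hk1 j)
        (hAcol (n + 1) hk1 j')
        (fun k k' => ih i k k')
      have hNδ : (1 : ℝ) - N * (ε ^ 4 / N) = 1 - ε ^ 4 := by
        field_simp
      rw [hNδ] at hdob
      have hBb : |B (n + 1) i j - B (n + 1) i j'| ≤ 4 * K / ε ^ 3 := by
        have h1 := hB (n + 1) hk1 i j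
        have h2 := hB (n + 1) hk1 i j'
        have h3 := abs_sub (B (n + 1) i j) (B (n + 1) i j')
        have h4 : 2 * (2 * K / ε ^ 3) = 4 * K / ε ^ 3 := by ring
        linarith
      have split : W (n + 1) i j - W (n + 1) i j'
          = (∑ k, W n i k * (A (n + 1) k j - A (n + 1) k j'))
            + (B (n + 1) i j - B (n + 1) i j') := by
        rw [hWs j, hWs j']
        simp only [mul_sub, Finset.sum_sub_distrib]
        ring
      calc |W (n + 1) i j - W (n + 1) i j'|
          ≤ |∑ k, W n i k * (A (n + 1) k j - A (n + 1) k j')|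
            + |B (n + 1) i j - B (n + 1) i j'| := by
            rw [split]; exact abs_add_le _ _
        _ ≤ (1 - ε ^ 4) * ((1 - ε ^ 4) ^ n * (2 * entryNorm (V 0))
              + (4 * K / ε ^ 3) * ∑ m ∈ Finset.range n, (1 - ε ^ 4) ^ m)
            + 4 * K / ε ^ 3 := add_le_add hdob hBb
        _ = (1 - ε ^ 4) ^ (n + 1) * (2 * entryNorm (V 0))
            + (4 * K / ε ^ 3) * ∑ m ∈ Finset.range (n + 1), (1 - ε ^ 4) ^ m := by
            rw [geom_sum_succ, pow_succ]
            ring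
  -- geometric sum bound
  have hgeo : ∀ n, ∑ m ∈ Finset.range n, (1 - ε ^ 4) ^ m ≤ 1 / ε ^ 4 := by
    intro n
    induction n with
    | zero => simp; positivity
    | succ n ih =>
      rw [geom_sum_succ]
      have h1 : (1 - ε ^ 4) * ∑ m ∈ Finset.range n, (1 - ε ^ 4) ^ m
          ≤ (1 - ε ^ 4) * (1 / ε ^ 4) := mul_le_mul_of_nonneg_left ih hr0
      have h2 : (1 - ε ^ 4) * (1 / ε ^ 4) + 1 = 1 / ε ^ 4 := by
        field_simp
        ring
      linarith
  -- conclusion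
  intro n _
  have hVb : ∀ (p : Fin d × Fin N), |V n p.1 p.2| ≤
      (1 - ε ^ 4) ^ n * (2 * entryNorm (V 0))
        + (4 * K / ε ^ 3) * ∑ m ∈ Finset.range n, (1 - ε ^ 4) ^ m := by
    rintro ⟨i, j⟩
    have hform : V n i j = (1 / N) * ∑ k, (W n i j - W n i k) := by
      rw [hVW n i j, Finset.sum_sub_distrib, Finset.sum_const, Finset.card_univ,
        Fintype.card_fin, nsmul_eq_mul]
      field_simp
    calc |V n i j| = (1 / N) * |∑ k, (W n i j - W n i k)| := by
          rw [hform, abs_mul, abs_of_pos (by positivity : (0:ℝ) < 1 / N)]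
      _ ≤ (1 / N) * ∑ k, |W n i j - W n i k| := by
          gcongr
          exact Finset.abs_sum_le_sum_abs _ _
      _ ≤ (1 / N) * ∑ _k : Fin N, ((1 - ε ^ 4) ^ n * (2 * entryNorm (V 0))
            + (4 * K / ε ^ 3) * ∑ m ∈ Finset.range n, (1 - ε ^ 4) ^ m) := by
          gcongr with k
          exact key n i j k
      _ = (1 - ε ^ 4) ^ n * (2 * entryNorm (V 0))
            + (4 * K / ε ^ 3) * ∑ m ∈ Finset.range n, (1 - ε ^ 4) ^ m := by
          rw [Finset.sum_const, Finset.card_univ, Fintype.card_fin, nsmul_eq_mul]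
          field_simp
  have hEn : entryNorm (V n) ≤ (1 - ε ^ 4) ^ n * (2 * entryNorm (V 0))
      + (4 * K / ε ^ 3) * ∑ m ∈ Finset.range n, (1 - ε ^ 4) ^ m :=
    ciSup_le hVb
  have hgeo' : (4 * K / ε ^ 3) * ∑ m ∈ Finset.range n, (1 - ε ^ 4) ^ m
      ≤ 4 * K / ε ^ 7 := by
    have h1 := mul_le_mul_of_nonneg_left (hgeo n) hc0
    have h2 : (4 * K / ε ^ 3) * (1 / ε ^ 4) = 4 * K / ε ^ 7 := by
      rw [div_mul_div_comm, mul_one, ← pow_add]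
    linarith
  have hpow0 : (0 : ℝ) ≤ (1 - ε ^ 4) ^ n := pow_nonneg hr0 n
  have hcoef : (2 : ℝ) ≤ 4 * K / ε ^ 7 := by
    rw [le_div_iff₀ hεp7]
    nlinarith
  have hfirst : (1 - ε ^ 4) ^ n * (2 * entryNorm (V 0))
      ≤ (4 * K / ε ^ 7) * ((1 - ε ^ 4) ^ n * entryNorm (V 0)) := by
    have := mul_nonneg hpow0 hV0
    nlinarith
  have hexp : (4 * K / ε ^ 7) * (1 + (1 - ε ^ 4) ^ n * entryNorm (V 0))
      = 4 * K / ε ^ 7 + (4 * K / ε ^ 7) * ((1 - ε ^ 4) ^ n * entryNorm (V 0)) := by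
    ring
  linarith
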